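/- In the layered data structure, after an access to x found in T_j, x is inserted into T_1,...,T_{j−1} and the least-recently-inserted element is removed from each; this preserves the invariants |T_ℓ| = 2^{2^ℓ} for all ℓ < j and T_ℓ ⊆ T_{ℓ+1} for all ℓ, provided the invariants held before the access. -/

import Mathlib

lemma tail_append' {l m : List ℕ} (h : l ≠ []) :
    (l ++ m).tail = l.tail ++ m := by
  cases l with
  | nil => simp at h
  | cons a t => simp

lemma mem_tail_subset {l : List ℕ} {a : ℕ} (h : a ∈ l.tail) : a ∈ l := by
  cases l with
  | nil => simp at h
  | cons b t => exact List.mem_cons_of_mem _ h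

/-- After accessing `x`, found in tree `T j`, the element `x` is enqueued at
the back of each queue `Q ℓ` (`ℓ < j`) and the front (least-recently inserted)
element is dequeued and deleted from the corresponding tree.  If beforehand
each `Q ℓ` has no duplicates, length `2^(2^ℓ)`, is a suffix of `Q (ℓ+1)`
(its elements are the most recently inserted elements of the next level), the
top modified level is contained in `T j`, and `x ∈ T j` but `x` is in none of
`Q 0,…,Q (j-1)`, then afterwards the size invariant `|T ℓ| = 2^(2^ℓ)` and the
nesting invariant `T ℓ ⊆ T (ℓ+1)` are preserved. -/
theorem restructure_preserves_invariants (j : ℕ) (hj : 1 ≤ j)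
    (Q : ℕ → List ℕ) (Tj : Finset ℕ) (x : ℕ)
    (hnodup : ∀ ℓ, (Q ℓ).Nodup)
    (hlen : ∀ ℓ < j, (Q ℓ).length = 2 ^ 2 ^ ℓ)
    (hsuffix : ∀ ℓ, ℓ + 1 < j → Q ℓ <:+ Q (ℓ + 1))
    (htop : (Q (j - 1)).toFinset ⊆ Tj)
    (hxTj : x ∈ Tj) (hxnot : ∀ ℓ < j, x ∉ Q ℓ) :
    (∀ ℓ < j, ((Q ℓ ++ [x]).tail).toFinset.card = 2 ^ 2 ^ ℓ) ∧
    (∀ ℓ, ℓ + 1 < j →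
      ((Q ℓ ++ [x]).tail).toFinset ⊆ ((Q (ℓ + 1) ++ [x]).tail).toFinset) ∧
    ((Q (j - 1) ++ [x]).tail).toFinset ⊆ Tj := by
  have hne : ∀ ℓ < j, Q ℓ ≠ [] := by
    intro ℓ hℓ h
    have := hlen ℓ hℓ
    rw [h] at this
    simp at this
    exact (pow_pos two_pos _).ne' this.symm
  refine ⟨?_, ?_, ?_⟩
  · intro ℓ hℓ
    have hnd : ((Q ℓ ++ [x]).tail).Nodup := by
      refine List.Nodup.sublist (List.tail_sublist _) ?_
      simp [List.nodup_append, hnodup ℓ, hxnot ℓ hℓ]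
      intro a ha hax; exact hxnot ℓ hℓ (hax ▸ ha)
    rw [List.toFinset_card_of_nodup hnd]
    have : (Q ℓ ++ [x]).tail.length = (Q ℓ).length + 1 - 1 := by
      rw [List.length_tail]; simp
    rw [this, hlen ℓ hℓ, Nat.add_sub_cancel]
  · intro ℓ hℓ
    -- front of Q (ℓ+1) is not in Q ℓ since Q ℓ is a strictly shorter suffix
    obtain ⟨t, ht⟩ := hsuffix ℓ hℓ
    have hlt : (Q ℓ).length < (Q (ℓ+1)).length := by
      rw [hlen ℓ (Nat.lt_of_succ_lt hℓ), hlen (ℓ+1) hℓ]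
      exact Nat.pow_lt_pow_right one_lt_two (Nat.pow_lt_pow_right one_lt_two (Nat.lt_succ_self ℓ))
    have htne : t ≠ [] := by
      intro h; rw [h] at ht; simp at ht; rw [ht] at hlt; exact lt_irrefl _ hlt
    have hsuf' : Q ℓ <:+ (Q (ℓ+1)).tail := by
      refine ⟨t.tail, ?_⟩
      rw [← ht, tail_append' htne]
    intro a ha
    simp only [List.mem_toFinset] at ha ⊢
    rw [tail_append' (hne ℓ (Nat.lt_of_succ_lt hℓ))] at ha
    rw [tail_append' (hne (ℓ+1) hℓ)]
    rcases List.mem_append.mp ha with h | h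
    · exact List.mem_append.mpr (Or.inl (hsuf'.subset (mem_tail_subset h)))
    · exact List.mem_append.mpr (Or.inr h)
  · intro a ha
    simp only [List.mem_toFinset] at ha
    have hj1 : j - 1 < j := Nat.sub_lt hj one_pos
    rw [tail_append' (hne _ hj1)] at ha
    rcases List.mem_append.mp ha with h | h
    · exact htop (List.mem_toFinset.mpr (mem_tail_subset h))
    · simp at h; rw [h]; exact hxTj
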